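/- Laplace transform of the inverse gamma distribution satisfies a Bessel-type ODE: Let W be inverse gamma distributed with parameters a > 0 and b > 0, and let h(λ) = E[exp(−λW)] for λ ≥ 0 be its Laplace transform. Then h satisfies the second-order differential equation λ h''(λ) = (a−1) h'(λ) + b h(λ) for all λ > 0, with h(0) = 1. -/

import Mathlib

open MeasureTheory ProbabilityTheory Filter Asymptotics Topology

noncomputable section

/-- The probability generating function of a mass function `f` on `ℕ`, evaluated at `s`:
`f(s) = ∑_z s^z f[z]`. -/
def pgfEval (f : ℕ → ℝ) (s : ℝ) : ℝ := ∑' z : ℕ, s ^ z * f z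

/-- The mean `f'(1) = ∑_z z f[z]` of a mass function on `ℕ`. -/
def pgfMean (f : ℕ → ℝ) : ℝ := ∑' z : ℕ, (z : ℝ) * f z

/-- The second factorial moment `f''(1) = ∑_z z(z-1) f[z]`. -/
def pgfFact2 (f : ℕ → ℝ) : ℝ := ∑' z : ℕ, (z : ℝ) * ((z : ℝ) - 1) * f z

/-- The `r`-th moment `∑_z z^r f[z]` of a mass function on `ℕ`. -/
def pgfMom (f : ℕ → ℝ) (r : ℕ) : ℝ := ∑' z : ℕ, (z : ℝ) ^ r * f z

/-- `f` is a probability mass function on `ℕ`. -/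
def IsPMF (f : ℕ → ℝ) : Prop := (∀ z, 0 ≤ f z) ∧ Summable f ∧ ∑' z : ℕ, f z = 1

/-- The shape function `ψ` of a probability generating function `f` with mean `m`:
`ψ(s) = 1/(1-f(s)) - 1/(m(1-s))` for `s < 1`, extended by `ψ(1) = f''(1)/(2 f'(1)^2)`. -/
def shapeFun (f : ℕ → ℝ) (s : ℝ) : ℝ :=
  if s < 1 then 1 / (1 - pgfEval f s) - 1 / (pgfMean f * (1 - s))
  else pgfFact2 f / (2 * (pgfMean f) ^ 2)

/-- Iterated composition of generating functions:
`compEval fs n s = fs 0 (fs 1 (⋯ (fs (n-1) s)⋯))`, `compEval fs 0 s = s`. -/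
def compEval : (ℕ → ℕ → ℝ) → ℕ → ℝ → ℝ
  | _, 0, s => s
  | fs, n + 1, s => pgfEval (fs 0) (compEval (fun i => fs (i + 1)) n s)

/-- The density of the inverse gamma distribution with parameters `a, b`. -/
def invGammaPDF (a b x : ℝ) : ℝ :=
  if 0 < x then b ^ a / Real.Gamma a * x ^ (-a - 1) * Real.exp (-b / x) else 0

/-- The inverse gamma distribution with parameters `a, b`, as a measure on `ℝ`. -/
def invGammaMeasure (a b : ℝ) : Measure ℝ :=
  MeasureTheory.volume.withDensity (fun x => ENNReal.ofReal (invGammaPDF a b x))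

section InvGammaAuxSec
open Set
namespace InvGammaAux

variable {a b : ℝ}


lemma masterInt (hb : 0 < b) {l : ℝ} (hl : 0 < l) (r : ℝ) :
    IntegrableOn (fun x : ℝ => x ^ r * (Real.exp (-(l * x)) * Real.exp (-b / x)))
      (Set.Ioi 0) := by
  obtain ⟨n, hn⟩ := exists_nat_gt (-1 - r)
  have hrn : (-1 : ℝ) < r + n := by linarith
  have hint : IntegrableOn (fun x : ℝ => x ^ (r + n) * Real.exp (-l * x)) (Set.Ioi 0) := by
    simpa [Real.rpow_one] using integrableOn_rpow_mul_exp_neg_mul_rpow (p := 1) hrn zero_lt_one hl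
  refine Integrable.mono' (hint.const_mul ((n.factorial : ℝ) / b ^ n)) ?_ ?_
  · refine ContinuousOn.aestronglyMeasurable ?_ measurableSet_Ioi
    refine (continuousOn_id.rpow_const fun x hx => Or.inl (ne_of_gt hx)).mul ?_
    refine (Continuous.continuousOn (by continuity)).mul ?_
    exact ContinuousOn.rexp (continuousOn_const.div continuousOn_id fun x hx => ne_of_gt hx)
  · rw [ae_restrict_iff' measurableSet_Ioi]
    refine ae_of_all _ fun x hx => ?_
    have hx0 : (0 : ℝ) < x := hx
    have h1 : Real.exp (-b / x) ≤ (n.factorial : ℝ) / b ^ n * x ^ (n : ℕ) := by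
      have hbx : (0 : ℝ) ≤ b / x := by positivity
      have h2 : (b / x) ^ n / (n.factorial : ℝ) ≤ Real.exp (b / x) :=
        Real.pow_div_factorial_le_exp (b/x) hbx n
      have h4 : (0 : ℝ) < (b / x) ^ n / (n.factorial : ℝ) := by positivity
      have h3 : Real.exp (-b / x) = (Real.exp (b / x))⁻¹ := by
        rw [neg_div, Real.exp_neg]
      rw [h3]
      calc (Real.exp (b / x))⁻¹ ≤ ((b / x) ^ n / (n.factorial : ℝ))⁻¹ := by
            exact inv_anti₀ h4 h2
        _ = (n.factorial : ℝ) / b ^ n * x ^ (n : ℕ) := by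
            rw [div_pow]
            field_simp
    rw [Real.norm_eq_abs, abs_of_nonneg (mul_nonneg (Real.rpow_pos_of_pos hx0 r).le
      (by positivity))]
    calc x ^ r * (Real.exp (-(l * x)) * Real.exp (-b / x))
        ≤ x ^ r * (Real.exp (-(l * x)) * ((n.factorial : ℝ) / b ^ n * x ^ (n : ℕ))) := by
          refine mul_le_mul_of_nonneg_left ?_ (Real.rpow_pos_of_pos hx0 r).le
          exact mul_le_mul_of_nonneg_left h1 (Real.exp_pos _).le
      _ = (n.factorial : ℝ) / b ^ n * (x ^ (r + (n : ℝ)) * Real.exp (-l * x)) := by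
          rw [Real.rpow_add hx0, Real.rpow_natCast, neg_mul]
          ring

lemma Jint (hb : 0 < b) {l : ℝ} (hl : 0 < l) (k : ℕ) :
    IntegrableOn
      (fun x : ℝ => x ^ k * Real.exp (-(l * x)) * (x ^ (-a - 1) * Real.exp (-b / x)))
      (Set.Ioi 0) := by
  refine (masterInt hb hl ((k : ℝ) + (-a - 1))).congr_fun (fun x hx => ?_) measurableSet_Ioi
  have hx0 : (0 : ℝ) < x := hx
  beta_reduce
  rw [Real.rpow_add hx0, Real.rpow_natCast]
  ring

lemma hasDeriv_aux (hb : 0 < b) {l : ℝ} (hl : 0 < l) (k : ℕ) :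
    HasDerivAt
      (fun t => ∫ x in Set.Ioi 0,
        x ^ k * Real.exp (-(t * x)) * (x ^ (-a - 1) * Real.exp (-b / x)))
      (-∫ x in Set.Ioi 0,
        x ^ (k + 1) * Real.exp (-(l * x)) * (x ^ (-a - 1) * Real.exp (-b / x))) l := by
  have h := hasDerivAt_integral_of_dominated_loc_of_deriv_le
    (μ := MeasureTheory.volume.restrict (Set.Ioi 0))
    (F := fun t (x : ℝ) => x ^ k * Real.exp (-(t * x)) * (x ^ (-a - 1) * Real.exp (-b / x)))
    (F' := fun t (x : ℝ) => -(x ^ (k + 1) * Real.exp (-(t * x)) * (x ^ (-a - 1) * Real.exp (-b / x))))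
    (bound := fun x : ℝ => x ^ (k + 1) * Real.exp (-(l / 2 * x)) * (x ^ (-a - 1) * Real.exp (-b / x)))
    (x₀ := l) (Metric.ball_mem_nhds l (half_pos hl)) ?_ (Jint hb hl k) ?_ ?_ (Jint hb (half_pos hl) (k + 1)) ?_
  · rcases h with ⟨_, h2⟩
    rwa [integral_neg] at h2
  · refine eventually_of_mem (Ioi_mem_nhds (by linarith : l / 2 < l)) fun t ht => ?_
    exact (Jint hb (lt_trans (half_pos hl) ht) k).aestronglyMeasurable
  · exact ((Jint hb hl (k + 1)).neg).aestronglyMeasurable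
  · rw [ae_restrict_iff' measurableSet_Ioi]
    refine ae_of_all _ fun x hx => fun t ht => ?_
    have hx0 : (0 : ℝ) < x := hx
    have hQ : (0 : ℝ) ≤ x ^ (-a - 1) * Real.exp (-b / x) :=
      mul_nonneg (Real.rpow_pos_of_pos hx0 _).le (Real.exp_pos _).le
    have ht2 : l / 2 ≤ t := by
      rw [Metric.mem_ball, Real.dist_eq, abs_lt] at ht
      linarith
    rw [norm_neg, Real.norm_eq_abs,
      abs_of_nonneg (mul_nonneg (mul_nonneg (by positivity) (Real.exp_pos _).le) hQ)]
    refine mul_le_mul_of_nonneg_right ?_ hQ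
    refine mul_le_mul_of_nonneg_left ?_ (by positivity)
    exact Real.exp_le_exp.2 (by nlinarith)
  · refine ae_of_all _ fun x t _ => ?_
    have hd : HasDerivAt (fun t : ℝ => -(t * x)) (-x) t := (hasDerivAt_mul_const x).neg
    have h2 := ((hd.exp).const_mul ((x : ℝ) ^ k)).mul_const
      (x ^ (-a - 1) * Real.exp (-b / x))
    convert h2 using 1
    show -(x ^ (k + 1) * Real.exp (-(t * x)) * (x ^ (-a - 1) * Real.exp (-b / x))) = _
    rw [pow_succ]
    ring
    rfl

lemma keyIdentity (ha : 0 < a) (hb : 0 < b) {l : ℝ} (hl : 0 < l) :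
    l * ∫ x in Set.Ioi 0, x ^ 2 * Real.exp (-(l * x)) * (x ^ (-a - 1) * Real.exp (-b / x))
      = (1 - a) * (∫ x in Set.Ioi 0,
          x ^ 1 * Real.exp (-(l * x)) * (x ^ (-a - 1) * Real.exp (-b / x)))
        + b * ∫ x in Set.Ioi 0,
          x ^ 0 * Real.exp (-(l * x)) * (x ^ (-a - 1) * Real.exp (-b / x)) := by
  have J0 := Jint (a := a) hb hl 0
  have J1 := Jint (a := a) hb hl 1
  have J2 := Jint (a := a) hb hl 2
  set G : ℝ → ℝ := fun x =>
    if x ≤ 0 then 0 else Real.exp (-(l * x) - b / x) * x ^ (1 - a) with hGdef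
  have hG0 : G 0 = 0 := if_pos le_rfl
  -- continuity at 0 within Ici 0
  have hIic : ContinuousWithinAt G (Iic 0) 0 :=
    (continuousWithinAt_const (b := (0 : ℝ))).congr (fun y hy => if_pos hy) (if_pos le_rfl)
  have hIoi : ContinuousWithinAt G (Ioi 0) 0 := by
    have hbase : Tendsto (fun t : ℝ => t ^ (a - 1) * Real.exp (-b * t)) atTop (𝓝 0) :=
      tendsto_rpow_mul_exp_neg_mul_atTop_nhds_zero (a - 1) b hb
    have hcomp : Tendsto (fun x : ℝ => (x⁻¹) ^ (a - 1) * Real.exp (-b * x⁻¹))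
        (𝓝[>] (0 : ℝ)) (𝓝 0) := hbase.comp tendsto_inv_nhdsGT_zero
    have hexp0 : Tendsto (fun x : ℝ => Real.exp (-(l * x))) (𝓝[>] (0 : ℝ)) (𝓝 1) := by
      have hc : Continuous fun x : ℝ => Real.exp (-(l * x)) := by continuity
      have h0 := hc.tendsto 0
      simpa using h0.mono_left nhdsWithin_le_nhds
    have hmul : Tendsto (fun x : ℝ => Real.exp (-(l * x)) * ((x⁻¹) ^ (a - 1)
        * Real.exp (-b * x⁻¹))) (𝓝[>] (0 : ℝ)) (𝓝 0) := by
      simpa using hexp0.mul hcomp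
    have hev : (fun x : ℝ => Real.exp (-(l * x)) * ((x⁻¹) ^ (a - 1) * Real.exp (-b * x⁻¹)))
        =ᶠ[𝓝[>] (0 : ℝ)] G := by
      refine eventuallyEq_of_mem self_mem_nhdsWithin fun y hy => ?_
      have hy0 : (0 : ℝ) < y := hy
      rw [hGdef]
      simp only [if_neg (not_le.mpr hy0)]
      have hinv : (y⁻¹ : ℝ) ^ (a - 1) = y ^ (1 - a) := by
        rw [← Real.rpow_neg_one y, ← Real.rpow_mul hy0.le]
        congr 1
        ring
      have hexp : Real.exp (-(l * y) - b / y) = Real.exp (-(l * y)) * Real.exp (-b * y⁻¹) := by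
        rw [← Real.exp_add]
        congr 1
        field_simp
        ring
      rw [hexp, hinv]
      ring
    have := hmul.congr' hev
    rwa [ContinuousWithinAt, hG0]
  have hcont : ContinuousWithinAt G (Ici 0) 0 :=
    (hIic.union hIoi).mono fun y _ => (le_or_gt y 0).imp id id
  -- tendsto at top
  have htop : Tendsto G atTop (𝓝 0) := by
    have h1 : Tendsto (fun x : ℝ => x ^ (1 - a) * Real.exp (-l * x)) atTop (𝓝 0) :=
      tendsto_rpow_mul_exp_neg_mul_atTop_nhds_zero (1 - a) l hl
    have h2 : Tendsto (fun x : ℝ => Real.exp (-b / x)) atTop (𝓝 1) := by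
      have hd : Tendsto (fun x : ℝ => -b / x) atTop (𝓝 0) :=
        tendsto_const_nhds.div_atTop tendsto_id
      have := (Real.continuous_exp.tendsto 0).comp hd
      simpa [Function.comp_def] using this
    have hmul : Tendsto (fun x : ℝ => x ^ (1 - a) * Real.exp (-l * x) * Real.exp (-b / x))
        atTop (𝓝 0) := by simpa using h1.mul h2
    refine hmul.congr' ?_
    refine eventuallyEq_of_mem (Ioi_mem_atTop (0 : ℝ)) fun y hy => ?_
    have hy0 : (0 : ℝ) < y := hy
    rw [hGdef]
    simp only [if_neg (not_le.mpr hy0)]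
    rw [show -(l * y) - b / y = -l * y + -b / y by ring, Real.exp_add]
    ring
  -- derivative on Ioi 0
  have hderiv : ∀ x ∈ Ioi (0 : ℝ), HasDerivAt G
      (b * (x ^ 0 * Real.exp (-(l * x)) * (x ^ (-a - 1) * Real.exp (-b / x)))
        + (1 - a) * (x ^ 1 * Real.exp (-(l * x)) * (x ^ (-a - 1) * Real.exp (-b / x)))
        - l * (x ^ 2 * Real.exp (-(l * x)) * (x ^ (-a - 1) * Real.exp (-b / x)))) x := by
    intro x hx
    have hx0 : (0 : ℝ) < x := hx
    have h1 : HasDerivAt (fun y : ℝ => -(l * y)) (-l) x := by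
      have : HasDerivAt (fun y : ℝ => l * y) l x := by
        simpa using (hasDerivAt_id x).const_mul l
      exact this.neg
    have h2 : HasDerivAt (fun y : ℝ => b / y) (b * -(x ^ 2)⁻¹) x := by
      simpa [div_eq_mul_inv] using (hasDerivAt_inv (ne_of_gt hx0)).const_mul b
    have hE := h1.sub h2
    have hexp := hE.exp
    have hpow : HasDerivAt (fun y : ℝ => y ^ (1 - a)) ((1 - a) * x ^ (1 - a - 1)) x :=
      Real.hasDerivAt_rpow_const (Or.inl (ne_of_gt hx0))
    have hmul := hexp.mul hpow
    have hev : G =ᶠ[𝓝 x] fun y => Real.exp (-(l * y) - b / y) * y ^ (1 - a) :=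
      eventuallyEq_of_mem (Ioi_mem_nhds hx0) fun y hy => if_neg (not_le.mpr hy)
    have hGd := hmul.congr_of_eventuallyEq hev
    refine hGd.congr_deriv ?_
    symm
    show _ = Real.exp (-(l * x) - b / x) * (-l - b * -(x ^ 2)⁻¹) * x ^ (1 - a)
      + Real.exp (-(l * x) - b / x) * ((1 - a) * x ^ (1 - a - 1))
    have e2 : x ^ (1 - a) = x ^ (-a - 1) * x ^ 2 := by
      rw [← Real.rpow_natCast x 2, ← Real.rpow_add hx0]
      congr 1
      push_cast
      ring
    have e1 : x ^ (1 - a - 1) = x ^ (-a - 1) * x ^ 1 := by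
      rw [← Real.rpow_natCast x 1, ← Real.rpow_add hx0]
      congr 1
      push_cast
      ring
    have eexp : Real.exp (-(l * x) - b / x) = Real.exp (-(l * x)) * Real.exp (-b / x) := by
      rw [← Real.exp_add]
      congr 1
      ring
    rw [e2, e1, eexp]
    have hx2 : x ^ 2 ≠ 0 := by positivity
    simp only [pow_zero, pow_one, one_mul]
    field_simp
    ring
  have hint : IntegrableOn (fun x : ℝ =>
      b * (x ^ 0 * Real.exp (-(l * x)) * (x ^ (-a - 1) * Real.exp (-b / x)))
        + (1 - a) * (x ^ 1 * Real.exp (-(l * x)) * (x ^ (-a - 1) * Real.exp (-b / x)))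
        - l * (x ^ 2 * Real.exp (-(l * x)) * (x ^ (-a - 1) * Real.exp (-b / x)))) (Ioi 0) :=
    ((J0.const_mul b).add (J1.const_mul (1 - a))).sub (J2.const_mul l)
  have key := integral_Ioi_of_hasDerivAt_of_tendsto hcont hderiv hint htop
  rw [hG0, sub_zero] at key
  have hintAB : IntegrableOn (fun x : ℝ =>
      b * (x ^ 0 * Real.exp (-(l * x)) * (x ^ (-a - 1) * Real.exp (-b / x)))
        + (1 - a) * (x ^ 1 * Real.exp (-(l * x)) * (x ^ (-a - 1) * Real.exp (-b / x))))
      (Ioi 0) := (J0.const_mul b).add (J1.const_mul (1 - a))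
  rw [integral_sub hintAB (J2.const_mul l),
    integral_add (J0.const_mul b) (J1.const_mul (1 - a)),
    integral_const_mul, integral_const_mul, integral_const_mul] at key
  linear_combination -key




lemma pdf_meas : Measurable (invGammaPDF a b) := by
  unfold invGammaPDF
  refine Measurable.ite measurableSet_Ioi ?_ measurable_const
  fun_prop

lemma reduce (ha : 0 < a) (hb : 0 < b) (g : ℝ → ℝ) :
    ∫ x, g x ∂invGammaMeasure a b
      = ∫ x in Set.Ioi 0,
          g x * (b ^ a / Real.Gamma a * (x ^ (-a - 1) * Real.exp (-b / x))) := by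
  have hm : Measurable fun x => (invGammaPDF a b x).toNNReal :=
    pdf_meas.real_toNNReal
  rw [invGammaMeasure,
    show (fun x => ENNReal.ofReal (invGammaPDF a b x))
      = (fun x => ((invGammaPDF a b x).toNNReal : ENNReal)) from rfl,
    integral_withDensity_eq_integral_smul hm g,
    ← integral_indicator measurableSet_Ioi]
  congr 1
  funext x
  by_cases hx : 0 < x
  · have hnn : 0 ≤ invGammaPDF a b x := by
      unfold invGammaPDF
      rw [if_pos hx]
      exact mul_nonneg (mul_nonneg (div_nonneg (Real.rpow_pos_of_pos hb a).le
        (Real.Gamma_pos_of_pos ha).le) (Real.rpow_pos_of_pos hx _).le) (Real.exp_pos _).le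
    rw [Set.indicator_of_mem (mem_Ioi.mpr hx)]
    rw [NNReal.smul_def, Real.coe_toNNReal _ hnn, smul_eq_mul]
    unfold invGammaPDF
    rw [if_pos hx]
    ring
  · rw [Set.indicator_of_notMem (by simpa using hx)]
    have : invGammaPDF a b x = 0 := by unfold invGammaPDF; rw [if_neg hx]
    simp [this]


end InvGammaAux
end InvGammaAuxSec

open Set InvGammaAux

/-- **Laplace transform of the inverse gamma distribution satisfies a Bessel-type
ODE** (Lemma 3): if `W` is inverse gamma distributed with parameters `a > 0`, `b > 0`
and `h(λ) = E[exp(-λ W)]`, then `h(0) = 1` and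
`λ h''(λ) = (a-1) h'(λ) + b h(λ)` for all `λ > 0`. -/
theorem inverse_gamma_laplace_ode
    (a b : ℝ) (ha : 0 < a) (hb : 0 < b)
    (h : ℝ → ℝ)
    (hdef : ∀ l : ℝ, h l = ∫ x, Real.exp (-(l * x)) ∂ invGammaMeasure a b) :
    h 0 = 1 ∧ ∀ l > (0 : ℝ), l * deriv (deriv h) l = (a - 1) * deriv h l + b * h l := by
  constructor
  · -- h 0 = 1
    rw [hdef 0, reduce ha hb]
    have e1 : ∫ x in Ioi (0:ℝ),
        Real.exp (-(0 * x)) * (b ^ a / Real.Gamma a * (x ^ (-a - 1) * Real.exp (-b / x)))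
      = b ^ a / Real.Gamma a * ∫ x in Ioi (0:ℝ), x ^ (-a - 1) * Real.exp (-b / x) := by
      rw [← integral_const_mul]
      refine setIntegral_congr_fun measurableSet_Ioi fun x hx => ?_
      simp
    rw [e1]
    have subst := integral_comp_rpow_Ioi
      (fun u : ℝ => u ^ (a - 1) * Real.exp (-(b * u))) (p := -1) (by norm_num)
    have e2 : ∀ x ∈ Ioi (0:ℝ),
        (|(-1 : ℝ)| * x ^ ((-1 : ℝ) - 1)) •
          ((x ^ (-1 : ℝ)) ^ (a - 1) * Real.exp (-(b * x ^ (-1 : ℝ))))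
        = x ^ (-a - 1) * Real.exp (-b / x) := by
      intro x hx
      have hx0 : (0 : ℝ) < x := hx
      rw [smul_eq_mul, abs_of_nonpos (by norm_num : (-1:ℝ) ≤ 0)]
      rw [← Real.rpow_mul hx0.le]
      rw [Real.rpow_neg_one]
      have hcomb : x ^ ((-1:ℝ) - 1) * x ^ ((-1:ℝ) * (a - 1)) = x ^ (-a - 1) := by
        rw [← Real.rpow_add hx0]
        congr 1
        ring
      have hexp : Real.exp (-(b * x⁻¹)) = Real.exp (-b / x) := by
        congr 1
        ring
      rw [neg_neg, hexp]
      calc 1 * x ^ ((-1:ℝ) - 1) * (x ^ ((-1:ℝ) * (a - 1)) * Real.exp (-b / x))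
          = x ^ ((-1:ℝ) - 1) * x ^ ((-1:ℝ) * (a - 1)) * Real.exp (-b / x) := by ring
        _ = x ^ (-a - 1) * Real.exp (-b / x) := by rw [hcomb]
    rw [setIntegral_congr_fun measurableSet_Ioi e2] at subst
    rw [subst, Real.integral_rpow_mul_exp_neg_mul_Ioi ha hb]
    have hba : (0:ℝ) < b ^ a := Real.rpow_pos_of_pos hb a
    have hg : (0:ℝ) < Real.Gamma a := Real.Gamma_pos_of_pos ha
    have hinv : ((1:ℝ) / b) ^ a = (b ^ a)⁻¹ := by
      rw [one_div, ← Real.rpow_neg_one b, ← Real.rpow_mul hb.le,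
        show (-1:ℝ) * a = -a by ring, Real.rpow_neg hb.le]
    rw [hinv]
    field_simp
  · -- the ODE
    intro l hl
    have hfun : h = fun t => b ^ a / Real.Gamma a * ∫ x in Ioi (0:ℝ),
        x ^ (0:ℕ) * Real.exp (-(t * x)) * (x ^ (-a - 1) * Real.exp (-b / x)) := by
      funext t
      rw [hdef t, reduce ha hb, ← integral_const_mul]
      refine setIntegral_congr_fun measurableSet_Ioi fun x hx => ?_
      simp only [pow_zero, one_mul]
      ring
    have hD0 : ∀ t : ℝ, 0 < t → HasDerivAt h
        (-(b ^ a / Real.Gamma a * ∫ x in Ioi (0:ℝ),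
          x ^ (1:ℕ) * Real.exp (-(t * x)) * (x ^ (-a - 1) * Real.exp (-b / x)))) t := by
      intro t ht
      rw [hfun]
      have := (hasDeriv_aux (a := a) hb ht 0).const_mul (b ^ a / Real.Gamma a)
      simpa using this
    have hderiv_h : ∀ t : ℝ, 0 < t → deriv h t
        = -(b ^ a / Real.Gamma a * ∫ x in Ioi (0:ℝ),
          x ^ (1:ℕ) * Real.exp (-(t * x)) * (x ^ (-a - 1) * Real.exp (-b / x))) :=
      fun t ht => (hD0 t ht).deriv
    have hD1 : HasDerivAt
        (fun t : ℝ => -(b ^ a / Real.Gamma a * ∫ x in Ioi (0:ℝ),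
          x ^ (1:ℕ) * Real.exp (-(t * x)) * (x ^ (-a - 1) * Real.exp (-b / x))))
        (b ^ a / Real.Gamma a * ∫ x in Ioi (0:ℝ),
          x ^ (2:ℕ) * Real.exp (-(l * x)) * (x ^ (-a - 1) * Real.exp (-b / x))) l := by
      have := ((hasDeriv_aux (a := a) hb hl 1).const_mul (b ^ a / Real.Gamma a)).neg
      simpa [Pi.neg_def] using this
    have e2 : deriv (deriv h) l = b ^ a / Real.Gamma a * ∫ x in Ioi (0:ℝ),
        x ^ (2:ℕ) * Real.exp (-(l * x)) * (x ^ (-a - 1) * Real.exp (-b / x)) := by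
      have hev : deriv h =ᶠ[𝓝 l] fun t => -(b ^ a / Real.Gamma a * ∫ x in Ioi (0:ℝ),
          x ^ (1:ℕ) * Real.exp (-(t * x)) * (x ^ (-a - 1) * Real.exp (-b / x))) :=
        eventuallyEq_of_mem (Ioi_mem_nhds hl) fun t ht => hderiv_h t ht
      rw [hev.deriv_eq]
      exact hD1.deriv
    have hval : h l = b ^ a / Real.Gamma a * ∫ x in Ioi (0:ℝ),
        x ^ (0:ℕ) * Real.exp (-(l * x)) * (x ^ (-a - 1) * Real.exp (-b / x)) := by
      rw [hfun]
    rw [e2, hderiv_h l hl, hval]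
    have hkey := keyIdentity ha hb hl
    linear_combination (b ^ a / Real.Gamma a) * hkey
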